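/- Let m ≥ 2, n = 2^m − 1, and let r be a positive integer with (r+1) | n. Let C be the binary cyclic code of length n with defining set of exponents Z = {j(r+1) : j = 0, 1, …, n/(r+1) − 1}. Then C is an LCD code, i.e., C ∩ C^⊥ = {0}. -/

import Mathlib

/-- The cyclic code of length `n` with defining set of exponents `Z`:
codewords have entries in the field `K`, and parity checks are computed in
the field `F` via the ring homomorphism `φ`, using powers of `α`. -/
def cyclicCode {K F : Type*} [Field K] [Field F] (φ : K →+* F) (n : ℕ) (α : F)
    (Z : Set ℕ) : Submodule K (Fin n → K) where
  carrier := {c | ∀ z ∈ Z, ∑ i : Fin n, φ (c i) * α ^ ((i : ℕ) * z) = 0}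
  add_mem' := by
    intro a b ha hb z hz
    have h : (∑ i : Fin n, φ ((a + b) i) * α ^ ((i : ℕ) * z))
        = (∑ i : Fin n, φ (a i) * α ^ ((i : ℕ) * z))
          + ∑ i : Fin n, φ (b i) * α ^ ((i : ℕ) * z) := by
      rw [← Finset.sum_add_distrib]
      refine Finset.sum_congr rfl fun i _ => ?_
      simp [add_mul]
    rw [h, ha z hz, hb z hz, add_zero]
  zero_mem' := by intro z hz; simp
  smul_mem' := by
    intro c a ha z hz
    have h : (∑ i : Fin n, φ ((c • a) i) * α ^ ((i : ℕ) * z))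
        = φ c * ∑ i : Fin n, φ (a i) * α ^ ((i : ℕ) * z) := by
      rw [Finset.mul_sum]
      refine Finset.sum_congr rfl fun i _ => ?_
      simp [mul_assoc]
    rw [h, ha z hz, mul_zero]

/-- The dual of a code: all vectors orthogonal to every codeword. -/
def dualCode {K : Type*} [Field K] {n : ℕ} (C : Set (Fin n → K)) : Set (Fin n → K) :=
  {x | ∀ c ∈ C, ∑ i : Fin n, x i * c i = 0}

/-- A linear code is LCD if its intersection with its dual is `{0}`. -/
def IsLCD {K : Type*} [Field K] {n : ℕ} (C : Submodule K (Fin n → K)) : Prop :=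
  (C : Set (Fin n → K)) ∩ dualCode (C : Set (Fin n → K)) = {0}

/-- A code has locality `r` if every coordinate position `i` is recoverable as a fixed
linear combination of at most `r` other coordinate positions, uniformly over all codewords. -/
def HasLocality {K : Type*} [Field K] {n : ℕ} (C : Set (Fin n → K)) (r : ℕ) : Prop :=
  ∀ i : Fin n, ∃ (R : Finset (Fin n)) (lam : Fin n → K),
    i ∉ R ∧ R.card ≤ r ∧ ∀ c ∈ C, c i = ∑ j ∈ R, lam j * c j

/-- The `q`-cyclotomic coset of `a` modulo `n`:
`[a] = {a·q^j mod n : j = 0, 1, 2, …}` (natural number version). -/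
def cycCoset (q n a : ℕ) : Set ℕ := {b | ∃ j : ℕ, b = a * q ^ j % n}


open Finset Polynomial

/-- Geometric sum of powers of an element of order `n`. -/
lemma aux_geom {F : Type*} [Field F] {n : ℕ} (hn : 0 < n) {α : F} (hα : orderOf α = n)
    (u : ℕ) : ∑ i : Fin n, α ^ ((i : ℕ) * u) = if n ∣ u then (n : F) else 0 := by
  have h1 : ∀ i : Fin n, α ^ ((i : ℕ) * u) = (α ^ u) ^ (i : ℕ) := by
    intro i; rw [mul_comm, pow_mul]
  simp only [h1]
  rw [Fin.sum_univ_eq_sum_range (fun i => (α ^ u) ^ i) n]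
  split_ifs with h
  · have : α ^ u = 1 := orderOf_dvd_iff_pow_eq_one.mp (hα ▸ h)
    simp [this]
  · have hne : α ^ u ≠ 1 := by
      intro hcon
      exact h (hα ▸ orderOf_dvd_iff_pow_eq_one.mpr hcon)
    rw [geom_sum_eq hne]
    have : (α ^ u) ^ n = 1 := by
      rw [← pow_mul, mul_comm, pow_mul, ← hα, pow_orderOf_eq_one, one_pow]
    rw [this, sub_self, zero_div]

/-- The "trace polynomial" `∑ y^(2^k)` does not vanish identically on a field
of `2^m` elements. -/
lemma aux_tr {F : Type*} [Field F] [Fintype F] (m : ℕ) (hm : 1 ≤ m)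
    (hcard : Fintype.card F = 2 ^ m) :
    ∃ y : F, ∑ k ∈ Finset.range m, y ^ 2 ^ k ≠ 0 := by
  by_contra hcon
  push_neg at hcon
  set p : F[X] := ∑ k ∈ Finset.range m, (X : F[X]) ^ 2 ^ k with hp
  have heval : ∀ y : F, p.eval y = 0 := by
    intro y
    rw [hp, Polynomial.eval_finset_sum]
    simpa using hcon y
  have hdeg : p.natDegree < Fintype.card F := by
    have h1 : p.natDegree ≤ 2 ^ (m - 1) := by
      apply Polynomial.natDegree_sum_le_of_forall_le
      intro k hk
      rw [Polynomial.natDegree_X_pow]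
      exact Nat.pow_le_pow_right (by norm_num) (by simp at hk; omega)
    have h2 : (2:ℕ) ^ (m-1) < 2 ^ m := Nat.pow_lt_pow_right (by norm_num) (by omega)
    omega
  have hp0 : p = 0 :=
    Polynomial.eq_zero_of_natDegree_lt_card_of_eval_eq_zero p Function.injective_id
      (fun y => heval y) hdeg
  have hc1 : p.coeff 1 = 1 := by
    rw [hp, Polynomial.finset_sum_coeff]
    have : ∀ k ∈ Finset.range m, ((X : F[X]) ^ 2 ^ k).coeff 1 = if k = 0 then 1 else 0 := by
      intro k _
      rw [Polynomial.coeff_X_pow]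
      by_cases hk : k = 0
      · simp [hk]
      · have : 2 ^ k ≠ 1 := by
          have : 2 ≤ 2 ^ k := by
            calc 2 = 2^1 := by norm_num
            _ ≤ 2^k := Nat.pow_le_pow_right (by norm_num) (by omega)
          omega
        simp [hk, Ne.symm this]
    rw [Finset.sum_congr rfl this]
    have h0 : (0:ℕ) ∈ Finset.range m := Finset.mem_range.mpr (by omega)
    rw [Finset.sum_ite_eq' (Finset.range m) 0 (fun _ => (1:F)), if_pos h0]
  rw [hp0] at hc1
  simp at hc1

lemma aux_zmod2 : ∀ b : ZMod 2, b = 0 ∨ b = 1 := by decide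

/-- Construction 1 of Goparaju et al.: the binary cyclic code of length `n = 2^m − 1`
with defining set of exponents `{j(r+1) : j = 0, …, n/(r+1) − 1}` is an LCD code. -/
theorem stmt3 (m : ℕ) (hm : 2 ≤ m) (n : ℕ) (hn : n = 2 ^ m - 1)
    (F : Type*) [Field F] [Fintype F] [CharP F 2] (hcard : Fintype.card F = 2 ^ m)
    (α : F) (hα : orderOf α = n)
    (r : ℕ) (hr : 0 < r) (hrn : r + 1 ∣ n) :
    IsLCD (cyclicCode (ZMod.castHom (dvd_refl 2) F) n α
      {z | ∃ j < n / (r + 1), z = j * (r + 1)}) := by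
  haveI : Fact (Nat.Prime 2) := ⟨Nat.prime_two⟩
  have h2m : (2:ℕ)^2 ≤ 2^m := Nat.pow_le_pow_right (by norm_num) hm
  have hn0 : 0 < n := by omega
  have h2dvd : (2:ℕ) ∣ 2^m := dvd_pow_self 2 (by omega)
  have hodd : ¬ (2:ℕ) ∣ n := by omega
  have hoddr : ¬ (2:ℕ) ∣ (r+1) := fun h => hodd (h.trans hrn)
  have hcop : ∀ k : ℕ, Nat.Coprime (r+1) (2^k) := fun k =>
    Nat.Coprime.pow_right k (Nat.coprime_two_right.mpr (Nat.odd_iff.mpr (by omega)))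
  set φ : ZMod 2 →+* F := ZMod.castHom (dvd_refl 2) F with hφdef
  have h2F : ((2:ℕ) : F) = 0 := CharP.cast_eq_zero F 2
  have hnF : (n : F) = 1 := by
    rw [hn, Nat.cast_sub (by omega : 1 ≤ 2^m), Nat.cast_pow, h2F]
    rw [zero_pow (by omega : m ≠ 0), Nat.cast_one, zero_sub, CharTwo.neg_eq]
  have hgeom : ∀ u : ℕ, ∑ i : Fin n, α ^ ((i:ℕ) * u) = if n ∣ u then 1 else 0 := by
    intro u
    rw [aux_geom hn0 hα u, hnF]
  have hz2 : ∀ b : ZMod 2, b = 0 ∨ b = 1 := aux_zmod2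
  have φ01 : ∀ a : ZMod 2, φ a = 0 ∨ φ a = 1 := by
    intro a
    rcases hz2 a with h | h <;> simp [h]
  unfold IsLCD
  apply Set.eq_singleton_iff_unique_mem.mpr
  constructor
  · exact ⟨Submodule.zero_mem _, fun c _ => by simp⟩
  · rintro x ⟨hxC, hxD⟩
    have hC' : ∀ j, j < n/(r+1) →
        ∑ i : Fin n, φ (x i) * α ^ ((i:ℕ) * (j*(r+1))) = 0 :=
      fun j hj => hxC _ ⟨j, hj, rfl⟩
    set T : ℕ → F := fun t => ∑ i : Fin n, φ (x i) * α ^ ((i:ℕ)*t) with hT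
    have stepA : ∀ t : ℕ, (r+1) ∣ t → T t = 0 := by
      intro t ht
      have hαn : α ^ n = 1 := hα ▸ pow_orderOf_eq_one α
      have hpowmod : ∀ a : ℕ, α ^ a = α ^ (a % n) := by
        intro a
        conv_lhs => rw [← Nat.div_add_mod a n]
        rw [pow_add, pow_mul, hαn, one_pow, one_mul]
      have hmod : ∀ i : Fin n, α ^ ((i:ℕ)*t) = α ^ ((i:ℕ)*(t % n)) := by
        intro i
        rw [hpowmod ((i:ℕ)*t), hpowmod ((i:ℕ)*(t % n))]
        congr 1
        exact ((Nat.mod_modEq t n).mul_left (i:ℕ)).symm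
      have h1 : T t = T (t % n) := by
        simp only [hT]
        exact Finset.sum_congr rfl fun i _ => by rw [hmod i]
      have hd : (r+1) ∣ t % n := by
        refine (Nat.dvd_add_right (Dvd.dvd.mul_right hrn (t/n))).mp ?_
        rw [Nat.div_add_mod]
        exact ht
      have hj : t % n / (r+1) < n / (r+1) :=
        Nat.div_lt_div_of_lt_of_dvd hrn (Nat.mod_lt t hn0)
      have hjj : t % n / (r+1) * (r+1) = t % n := Nat.div_mul_cancel hd
      have h2 := hC' (t % n / (r+1)) hj
      rw [h1]
      simp only [hT]
      rw [← hjj]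
      exact h2
    have stepB : ∀ t : ℕ, ¬ (r+1) ∣ t → T t = 0 := by
      intro t ht
      by_contra hTne
      have key : ∀ β : F, ∑ k ∈ Finset.range m, (β * T t) ^ 2 ^ k = 0 := by
        intro β
        set y : Fin n → F := fun i => ∑ k ∈ Finset.range m, (β * α ^ ((i:ℕ)*t)) ^ 2 ^ k
          with hy
        have hy2 : ∀ i, y i ^ 2 = y i := by
          intro i
          set w : F := β * α ^ ((i:ℕ)*t) with hw
          have hsq : (∑ k ∈ Finset.range m, w ^ 2 ^ k) ^ 2
              = ∑ k ∈ Finset.range m, w ^ 2 ^ (k+1) := by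
            rw [sum_pow_char]
            exact Finset.sum_congr rfl fun k _ => by rw [← pow_mul, ← pow_succ]
          have hwm : w ^ 2 ^ m = w := by rw [← hcard]; exact FiniteField.pow_card w
          have htel := Finset.sum_range_sub (fun k => w ^ 2 ^ k) m
          rw [Finset.sum_sub_distrib] at htel
          simp only [hwm, pow_zero, pow_one, sub_self] at htel
          have heq : ∑ k ∈ Finset.range m, w ^ 2 ^ (k+1)
              = ∑ k ∈ Finset.range m, w ^ 2 ^ k := sub_eq_zero.mp htel
          simp only [hy]
          rw [← hw, hsq, heq]
        have y01 : ∀ i, y i = 0 ∨ y i = 1 := by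
          intro i
          have h := hy2 i
          have h2 : y i * (y i - 1) = 0 := by linear_combination h
          rcases mul_eq_zero.mp h2 with h' | h'
          · exact Or.inl h'
          · exact Or.inr (sub_eq_zero.mp h')
        classical
        set d : Fin n → ZMod 2 := fun i => if y i = 1 then 1 else 0 with hdd
        have hφd : ∀ i, φ (d i) = y i := by
          intro i
          rcases y01 i with h | h
          · simp [hdd, h]
          · simp [hdd, h]
        have hdC : d ∈ cyclicCode φ n α {z | ∃ j < n / (r + 1), z = j * (r + 1)} := by
          intro z hz
          obtain ⟨j, hj, rfl⟩ := hz
          calc ∑ i : Fin n, φ (d i) * α ^ ((i:ℕ)*(j*(r+1)))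
              = ∑ i : Fin n, ∑ k ∈ Finset.range m,
                  β ^ 2 ^ k * α ^ ((i:ℕ)*(t*2^k + j*(r+1))) := by
                refine Finset.sum_congr rfl fun i _ => ?_
                rw [hφd i]
                simp only [hy]
                rw [Finset.sum_mul]
                refine Finset.sum_congr rfl fun k _ => ?_
                rw [mul_pow, ← pow_mul, mul_assoc, ← pow_add]
                congr 2
                ring
            _ = ∑ k ∈ Finset.range m,
                  β ^ 2 ^ k * ∑ i : Fin n, α ^ ((i:ℕ)*(t*2^k + j*(r+1))) := by
                rw [Finset.sum_comm]
                exact Finset.sum_congr rfl fun k _ => by rw [Finset.mul_sum]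
            _ = 0 := by
                apply Finset.sum_eq_zero
                intro k _
                rw [hgeom, if_neg, mul_zero]
                intro hdvd
                have h1 : (r+1) ∣ t*2^k + j*(r+1) := hrn.trans hdvd
                have hz' : (r+1) ∣ j*(r+1) := ⟨j, mul_comm j (r+1)⟩
                have h2 : (r+1) ∣ t*2^k := (Nat.dvd_add_iff_left hz').mpr h1
                exact ht ((hcop k).dvd_of_dvd_mul_right h2)
        have h0 : ∑ i : Fin n, x i * d i = 0 := hxD d hdC
        have h1 : ∑ i : Fin n, φ (x i) * y i = 0 := by
          have h2 := congrArg φ h0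
          rw [map_sum, map_zero] at h2
          simpa only [map_mul, hφd] using h2
        calc ∑ k ∈ Finset.range m, (β * T t) ^ 2 ^ k
            = ∑ k ∈ Finset.range m, ∑ i : Fin n,
                (φ (x i) * (β * α ^ ((i:ℕ)*t))) ^ 2 ^ k := by
              refine Finset.sum_congr rfl fun k _ => ?_
              rw [← sum_pow_char_pow]
              congr 1
              simp only [hT]
              rw [Finset.mul_sum]
              exact Finset.sum_congr rfl fun i _ => by ring
          _ = ∑ i : Fin n, φ (x i) * y i := by
              rw [Finset.sum_comm]
              refine Finset.sum_congr rfl fun i _ => ?_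
              simp only [hy]
              rw [Finset.mul_sum]
              refine Finset.sum_congr rfl fun k _ => ?_
              rw [mul_pow]
              congr 1
              rcases φ01 (x i) with h | h <;>
                simp [h, zero_pow (by positivity : (2:ℕ)^k ≠ 0)]
          _ = 0 := h1
      obtain ⟨y0, hy0⟩ := aux_tr m (by omega) hcard
      apply hy0
      have h3 := key (y0 * (T t)⁻¹)
      rwa [mul_assoc, inv_mul_cancel₀ hTne, mul_one] at h3
    have hall : ∀ t : ℕ, T t = 0 := by
      intro t
      by_cases h : (r+1) ∣ t
      · exact stepA t h
      · exact stepB t h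
    funext i0
    show x i0 = 0
    apply φ.injective
    rw [map_zero]
    have hsum : ∑ t ∈ Finset.range n, T t * α ^ ((n - (i0:ℕ)) * t) = 0 :=
      Finset.sum_eq_zero fun t _ => by rw [hall t, zero_mul]
    have hmain : ∑ t ∈ Finset.range n, T t * α ^ ((n - (i0:ℕ)) * t) = φ (x i0) := by
      calc ∑ t ∈ Finset.range n, T t * α ^ ((n - (i0:ℕ)) * t)
          = ∑ t ∈ Finset.range n, ∑ i : Fin n,
              φ (x i) * α ^ (((i:ℕ) + (n - (i0:ℕ))) * t) := by
            refine Finset.sum_congr rfl fun t _ => ?_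
            simp only [hT]
            rw [Finset.sum_mul]
            refine Finset.sum_congr rfl fun i _ => ?_
            rw [mul_assoc, ← pow_add, ← add_mul]
        _ = ∑ i : Fin n, φ (x i) * ∑ t ∈ Finset.range n,
              α ^ (((i:ℕ) + (n - (i0:ℕ))) * t) := by
            rw [Finset.sum_comm]
            exact Finset.sum_congr rfl fun i _ => by rw [Finset.mul_sum]
        _ = ∑ i : Fin n, φ (x i) * (if i = i0 then 1 else 0) := by
            refine Finset.sum_congr rfl fun i _ => ?_
            congr 1
            have hiff : n ∣ ((i:ℕ) + (n - (i0:ℕ))) ↔ i = i0 := by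
              constructor
              · rintro ⟨c, hc⟩
                have hi : (i:ℕ) < n := i.isLt
                have hi0 : (i0:ℕ) < n := i0.isLt
                have hc2 : c < 2 := by
                  by_contra hcc
                  push_neg at hcc
                  have h4 : n*2 ≤ n*c := Nat.mul_le_mul_left n hcc
                  omega
                interval_cases c
                · omega
                · exact Fin.ext (by omega)
              · rintro rfl
                exact ⟨1, by omega⟩
            have hr := aux_geom hn0 hα ((i:ℕ) + (n - (i0:ℕ)))
            rw [Fin.sum_univ_eq_sum_range
              (fun j => α ^ (j * ((i:ℕ) + (n - (i0:ℕ))))) n] at hr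
            have hcomm : ∀ t ∈ Finset.range n,
                α ^ (((i:ℕ) + (n - (i0:ℕ))) * t) = α ^ (t * ((i:ℕ) + (n - (i0:ℕ)))) :=
              fun t _ => by rw [mul_comm]
            rw [Finset.sum_congr rfl hcomm, hr, hnF]
            by_cases hii : i = i0
            · rw [if_pos (hiff.mpr hii), if_pos hii]
            · rw [if_neg (fun h => hii (hiff.mp h)), if_neg hii]
        _ = φ (x i0) := by
            simp [mul_ite, mul_one, mul_zero, Finset.sum_ite_eq']
    rw [← hmain]
    exact hsum
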